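/- Defining the quantum f-entropy S_f(ρ) := Σ_{k,l} c̃(p_k,p_l) − 1 (where p_k are the eigenvalues of the density matrix ρ), the exact complementarity relation W^c(ρ)+P^c(ρ)+S_f(ρ) = d−1 holds. -/

import Mathlib

open Matrix Complex

private lemma vmv_mul_vmv {d : ℕ} (a b c e : Fin d → ℂ) :
    vecMulVec a b * vecMulVec c e = (b ⬝ᵥ c) • vecMulVec a e := by
  ext i j
  simp only [Matrix.mul_apply, vecMulVec_apply, Matrix.smul_apply, smul_eq_mul, dotProduct,
    Finset.sum_mul]
  exact Finset.sum_congr rfl fun _ _ => by ring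

private lemma trace_vmv {d : ℕ} (a b : Fin d → ℂ) :
    Matrix.trace (vecMulVec a b) = a ⬝ᵥ b := by
  simp [Matrix.trace, Matrix.diag, vecMulVec_apply, dotProduct]

private lemma vmv_conjT {d : ℕ} (a b : Fin d → ℂ) :
    (vecMulVec a (star b))ᴴ = vecMulVec b (star a) := by
  ext i j
  simp [conjTranspose_apply, vecMulVec_apply, mul_comm]

private lemma conj_dot {d : ℕ} (a u : Fin d → ℂ) :
    star (star a ⬝ᵥ u) = star u ⬝ᵥ a := by
  simp [dotProduct, mul_comm]

private lemma normSq_dot_symm {d : ℕ} (a u : Fin d → ℂ) :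
    Complex.normSq (star a ⬝ᵥ u) = Complex.normSq (star u ⬝ᵥ a) := by
  rw [← conj_dot a u]
  simp

private lemma complete' {d : ℕ} (u : Fin d → Fin d → ℂ)
    (hu : ∀ k l, star (u k) ⬝ᵥ u l = if k = l then 1 else 0) :
    ∑ i, vecMulVec (u i) (star (u i)) = (1 : Matrix (Fin d) (Fin d) ℂ) := by
  set M : Matrix (Fin d) (Fin d) ℂ := Matrix.of fun i k => u i k with hM
  have h1 : M * Mᴴ = 1 := by
    ext i j
    have h := hu j i
    simp only [dotProduct, Pi.star_apply] at h
    simp only [Matrix.mul_apply, conjTranspose_apply, Matrix.of_apply, one_apply, hM]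
    rw [show (∑ k, u i k * star (u j k)) = ∑ k, star (u j k) * u i k from
      Finset.sum_congr rfl fun _ _ => mul_comm _ _, h]
    simp [eq_comm]
  have h2 : Mᴴ * M = 1 := mul_eq_one_comm.mp h1
  ext a b
  have h3 := congrArg (fun A => A b a) h2
  simp only [Matrix.mul_apply, conjTranspose_apply, Matrix.of_apply, one_apply, hM] at h3
  simp only [Matrix.sum_apply, vecMulVec_apply, Pi.star_apply, one_apply]
  rw [show (∑ i, u i a * star (u i b)) = ∑ i, star (u i b) * u i a from
    Finset.sum_congr rfl fun _ _ => mul_comm _ _, h3]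
  simp [eq_comm]

private lemma trace_vmv_mul_vmv {d : ℕ} (a u : Fin d → ℂ) :
    Matrix.trace (vecMulVec u (star u) * vecMulVec a (star a))
      = (Complex.normSq (star a ⬝ᵥ u) : ℂ) := by
  rw [vmv_mul_vmv, Matrix.trace_smul, trace_vmv, smul_eq_mul]
  have h1 : u ⬝ᵥ star a = star a ⬝ᵥ u := dotProduct_comm _ _
  have h2 : star u ⬝ᵥ a = star (star a ⬝ᵥ u) := (conj_dot a u).symm
  rw [h1, h2]
  rw [show star (star a ⬝ᵥ u) * (star a ⬝ᵥ u)
      = (star a ⬝ᵥ u) * (starRingEnd ℂ) (star a ⬝ᵥ u) by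
    simp [Complex.star_def]; ring]
  exact Complex.mul_conj _

private lemma mul_star_eq_normSq (z : ℂ) : z * star z = (Complex.normSq z : ℂ) := by
  rw [show star z = (starRingEnd ℂ) z from rfl]
  exact Complex.mul_conj z

open Matrix in
/-- Defining the quantum `f`-entropy `S_f(ρ) = Σ_{k,l} c̃(p_k,p_l) − 1`, the exact
complementarity relation `W^c(ρ) + P^c(ρ) + S_f(ρ) = d − 1` holds, where
`W^c(ρ) = Σ_i I(E_{ii})` and `P^c(ρ) = Σ_{i≠j} I(E_{ij})` are the wave and
particle features defined via the metric-adjusted skew information `I`. -/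
theorem stmt11 (d : ℕ) (p : Fin d → ℝ) (v w : Fin d → Fin d → ℂ)
    (ctil : ℝ → ℝ → ℝ)
    (hv : ∀ k l, star (v k) ⬝ᵥ v l = if k = l then 1 else 0)
    (hw : ∀ i j, star (w i) ⬝ᵥ w j = if i = j then 1 else 0)
    (hp : ∀ k, 0 ≤ p k) (hsum : ∑ k, p k = 1)
    (hsymm : ∀ x y, ctil x y = ctil y x) (hdiag : ∀ x, ctil x x = x)
    (ρ : Matrix (Fin d) (Fin d) ℂ)
    (hρ : ρ = ∑ k, (p k : ℂ) • vecMulVec (v k) (star (v k)))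
    (E : Fin d → Fin d → Matrix (Fin d) (Fin d) ℂ)
    (hE : ∀ i j, E i j = vecMulVec (w i) (star (w j)))
    (I : Matrix (Fin d) (Fin d) ℂ → ℝ)
    (hI : ∀ A, I A = (1 / 2) * (Matrix.trace (ρ * (Aᴴ * A + A * Aᴴ))).re -
      ∑ k, ∑ l, ctil (p k) (p l) *
        (Matrix.trace (Aᴴ * vecMulVec (v k) (star (v k)) * A *
          vecMulVec (v l) (star (v l)))).re)
    (Sf : ℝ) (hSf : Sf = (∑ k, ∑ l, ctil (p k) (p l)) - 1) :
    (∑ i, I (E i i)) + (∑ i, ∑ j, if i ≠ j then I (E i j) else 0) + Sf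
      = (d : ℝ) - 1 := by
  classical
  set r : Fin d → Fin d → ℝ := fun i k => Complex.normSq (star (w i) ⬝ᵥ v k) with hr
  set t : Fin d → ℝ := fun j => ∑ k, p k * r j k with ht
  -- completeness
  have hwC : ∑ i, vecMulVec (w i) (star (w i)) = (1 : Matrix (Fin d) (Fin d) ℂ) :=
    complete' w hw
  have hvC : ∑ k, vecMulVec (v k) (star (v k)) = (1 : Matrix (Fin d) (Fin d) ℂ) :=
    complete' v hv
  -- row/column sums of r
  have hrow : ∀ k, ∑ i, r i k = 1 := by
    intro k
    have : ((∑ i, r i k : ℝ) : ℂ) = 1 := by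
      push_cast
      calc (∑ i, (Complex.normSq (star (w i) ⬝ᵥ v k) : ℂ))
          = ∑ i, Matrix.trace (vecMulVec (w i) (star (w i)) *
              vecMulVec (v k) (star (v k))) := by
            refine Finset.sum_congr rfl fun i _ => ?_
            rw [normSq_dot_symm (w i) (v k)]
            exact (trace_vmv_mul_vmv (v k) (w i)).symm
        _ = Matrix.trace ((∑ i, vecMulVec (w i) (star (w i))) *
              vecMulVec (v k) (star (v k))) := by
            rw [Finset.sum_mul, Matrix.trace_sum]
        _ = 1 := by rw [hwC, one_mul, trace_vmv, dotProduct_comm, hv k k]; simp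
    exact_mod_cast this
  have hcol : ∀ i, ∑ k, r i k = 1 := by
    intro i
    have : ((∑ k, r i k : ℝ) : ℂ) = 1 := by
      push_cast
      calc (∑ k, (Complex.normSq (star (w i) ⬝ᵥ v k) : ℂ))
          = ∑ k, Matrix.trace (vecMulVec (v k) (star (v k)) *
              vecMulVec (w i) (star (w i))) := by
            exact Finset.sum_congr rfl fun k _ => (trace_vmv_mul_vmv (w i) (v k)).symm
        _ = Matrix.trace ((∑ k, vecMulVec (v k) (star (v k))) *
              vecMulVec (w i) (star (w i))) := by
            rw [Finset.sum_mul, Matrix.trace_sum]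
        _ = 1 := by rw [hvC, one_mul, trace_vmv, dotProduct_comm, hw i i]; simp
    exact_mod_cast this
  have htsum : ∑ j, t j = 1 := by
    rw [ht]
    simp only
    rw [Finset.sum_comm]
    calc ∑ k, ∑ j, p k * r j k = ∑ k, p k * ∑ j, r j k :=
          Finset.sum_congr rfl fun k _ => (Finset.mul_sum _ _ _).symm
      _ = ∑ k, p k := Finset.sum_congr rfl fun k _ => by rw [hrow k, mul_one]
      _ = 1 := hsum
  -- trace of ρ against projector
  have htrρ : ∀ j, Matrix.trace (ρ * vecMulVec (w j) (star (w j))) = ((t j : ℝ) : ℂ) := by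
    intro j
    show _ = ((∑ k, p k * r j k : ℝ) : ℂ)
    rw [hρ, Finset.sum_mul, Matrix.trace_sum]
    push_cast
    refine Finset.sum_congr rfl fun k _ => ?_
    rw [smul_mul_assoc, Matrix.trace_smul, trace_vmv_mul_vmv (w j) (v k), smul_eq_mul]
  -- formula for I (E i j)
  have hIval : ∀ i j, I (E i j) = (1 / 2) * (t j + t i) -
      ∑ k, ∑ l, ctil (p k) (p l) * (r i k * r j l) := by
    intro i j
    rw [hI]
    have hEc : (E i j)ᴴ = vecMulVec (w j) (star (w i)) := by rw [hE]; exact vmv_conjT _ _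
    have h1 : (E i j)ᴴ * E i j + E i j * (E i j)ᴴ
        = vecMulVec (w j) (star (w j)) + vecMulVec (w i) (star (w i)) := by
      rw [hEc, hE, vmv_mul_vmv, vmv_mul_vmv, hw i i, hw j j]
      simp
    have h2 : (Matrix.trace (ρ * ((E i j)ᴴ * E i j + E i j * (E i j)ᴴ))).re = t j + t i := by
      rw [h1, Matrix.mul_add, Matrix.trace_add, htrρ j, htrρ i]
      push_cast
      simp
    rw [h2]
    congr 1
    refine Finset.sum_congr rfl fun k _ => Finset.sum_congr rfl fun l _ => ?_
    congr 1
    have h3 : Matrix.trace ((E i j)ᴴ * vecMulVec (v k) (star (v k)) * E i j *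
          vecMulVec (v l) (star (v l))) = ((r i k * r j l : ℝ) : ℂ) := by
      rw [hEc, hE]
      rw [vmv_mul_vmv, smul_mul_assoc, vmv_mul_vmv, smul_smul, smul_mul_assoc,
        vmv_mul_vmv, smul_smul, Matrix.trace_smul, trace_vmv, smul_eq_mul]
      have e1 : star (v k) ⬝ᵥ w i = star (star (w i) ⬝ᵥ v k) := (conj_dot (w i) (v k)).symm
      have e2 : star (v l) ⬝ᵥ w j = star (star (w j) ⬝ᵥ v l) := (conj_dot (w j) (v l)).symm
      have e3 : w j ⬝ᵥ star (v l) = star (v l) ⬝ᵥ w j := dotProduct_comm _ _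
      rw [e3, e1, e2]
      set z1 := star (w i) ⬝ᵥ v k with hz1
      set z2 := star (w j) ⬝ᵥ v l with hz2
      push_cast
      calc z1 * star z1 * z2 * star z2
          = (z1 * star z1) * (z2 * star z2) := by ring
        _ = (Complex.normSq z1 : ℂ) * (Complex.normSq z2 : ℂ) := by
            rw [mul_star_eq_normSq, mul_star_eq_normSq]
    rw [h3]
    push_cast
    simp
  -- from now on, r and t are opaque
  clear_value r t
  -- combine diagonal and off-diagonal sums
  have hsplit : (∑ i, I (E i i)) + (∑ i, ∑ j, if i ≠ j then I (E i j) else 0)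
      = ∑ i, ∑ j, I (E i j) := by
    rw [← Finset.sum_add_distrib]
    refine Finset.sum_congr rfl fun i _ => ?_
    have : ∑ j, I (E i j) = ∑ j, ((if i = j then I (E i j) else 0) +
        (if i ≠ j then I (E i j) else 0)) :=
      Finset.sum_congr rfl fun j _ => by by_cases h : i = j <;> simp [h]
    rw [this, Finset.sum_add_distrib, Finset.sum_ite_eq Finset.univ i (fun j => I (E i j))]
    simp
  rw [hsplit]
  -- the quadruple sum
  have hquad : ∑ i, ∑ j, ∑ k, ∑ l, ctil (p k) (p l) * (r i k * r j l)
      = ∑ k, ∑ l, ctil (p k) (p l) := by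
    have key : ∀ i, ∑ j, ∑ k, ∑ l, ctil (p k) (p l) * (r i k * r j l)
        = ∑ k, ∑ l, ctil (p k) (p l) * r i k := by
      intro i
      rw [Finset.sum_comm]
      refine Finset.sum_congr rfl fun k _ => ?_
      rw [Finset.sum_comm]
      refine Finset.sum_congr rfl fun l _ => ?_
      calc ∑ j, ctil (p k) (p l) * (r i k * r j l)
          = (ctil (p k) (p l) * r i k) * ∑ j, r j l := by
            rw [Finset.mul_sum]
            exact Finset.sum_congr rfl fun j _ => by ring
        _ = ctil (p k) (p l) * r i k := by rw [hrow l, mul_one]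
    calc ∑ i, ∑ j, ∑ k, ∑ l, ctil (p k) (p l) * (r i k * r j l)
        = ∑ i, ∑ k, ∑ l, ctil (p k) (p l) * r i k := Finset.sum_congr rfl fun i _ => key i
      _ = ∑ k, ∑ i, ∑ l, ctil (p k) (p l) * r i k := Finset.sum_comm
      _ = ∑ k, ∑ l, ctil (p k) (p l) := by
          refine Finset.sum_congr rfl fun k _ => ?_
          rw [Finset.sum_comm]
          refine Finset.sum_congr rfl fun l _ => ?_
          calc ∑ i, ctil (p k) (p l) * r i k = ctil (p k) (p l) * ∑ i, r i k :=
                (Finset.mul_sum _ _ _).symm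
            _ = ctil (p k) (p l) := by rw [hrow k, mul_one]
  -- the first (wave+particle energy) part
  have hhalf : ∑ i : Fin d, ∑ j : Fin d, (1 / 2 : ℝ) * (t j + t i) = (d : ℝ) := by
    have step1 : ∀ i : Fin d, ∑ j, (1 / 2 : ℝ) * (t j + t i)
        = 1 / 2 + (d : ℝ) * ((1 / 2) * t i) := by
      intro i
      have h : ∑ j, (1 / 2 : ℝ) * (t j + t i)
          = (∑ j, (1 / 2 : ℝ) * t j) + ∑ _j : Fin d, (1 / 2 : ℝ) * t i := by
        rw [← Finset.sum_add_distrib]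
        exact Finset.sum_congr rfl fun j _ => by ring
      rw [h, ← Finset.mul_sum, htsum, Finset.sum_const, Finset.card_fin, nsmul_eq_mul]
      ring
    calc ∑ i : Fin d, ∑ j : Fin d, (1 / 2 : ℝ) * (t j + t i)
        = ∑ i : Fin d, ((1 / 2 : ℝ) + (d : ℝ) * ((1 / 2) * t i)) :=
          Finset.sum_congr rfl fun i _ => step1 i
      _ = (∑ _i : Fin d, (1 / 2 : ℝ)) + ∑ i, (d : ℝ) * ((1 / 2) * t i) :=
          Finset.sum_add_distrib
      _ = (d : ℝ) * (1 / 2) + (d : ℝ) * ((1 / 2) * ∑ i, t i) := by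
          rw [Finset.sum_const, Finset.card_fin, nsmul_eq_mul]
          congr 1
          simp only [Finset.mul_sum]
      _ = (d : ℝ) := by rw [htsum]; ring
  -- total
  have htotal : ∑ i, ∑ j, I (E i j) = (d : ℝ) - ∑ k, ∑ l, ctil (p k) (p l) := by
    calc ∑ i, ∑ j, I (E i j)
        = ∑ i, ∑ j, ((1 / 2) * (t j + t i) -
            ∑ k, ∑ l, ctil (p k) (p l) * (r i k * r j l)) :=
          Finset.sum_congr rfl fun i _ => Finset.sum_congr rfl fun j _ => hIval i j
      _ = (∑ i, ∑ j, (1 / 2 : ℝ) * (t j + t i)) -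
            ∑ i, ∑ j, ∑ k, ∑ l, ctil (p k) (p l) * (r i k * r j l) := by
          rw [← Finset.sum_sub_distrib]
          exact Finset.sum_congr rfl fun i _ => Finset.sum_sub_distrib _ _
      _ = (d : ℝ) - ∑ k, ∑ l, ctil (p k) (p l) := by rw [hquad, hhalf]
  rw [htotal, hSf]
  ring
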